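/- If $r_i$ is the strict minimum of positive reals $r_1,r_2,r_3,r_4$, $Q_{1234}=0$, and moreover the curvatures-like quantities satisfy the monotonicity condition (for the single tetrahedron, $K_m \leq K_n$ iff $r_m \leq r_n$), then along the flow $dr_m/dt = (c - K_m) r_m$ one has $dQ/dt \geq 0$ at $Q = 0$, with equality only if $K_1=K_2=K_3=K_4$. -/

import Mathlib

theorem stmt6 (r K : Fin 4 → ℝ) (hr : ∀ m, 0 < r m) (c : ℝ) (i : Fin 4)
    (hmin : ∀ m, m ≠ i → r i < r m)
    (hmono : ∀ m n, r m ≤ r n ↔ K m ≤ K n)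
    (hQ : (∑ m, 1 / r m) ^ 2 - 2 * ∑ m, (1 / r m) ^ 2 = 0) :
    0 ≤ ∑ m, (-(2 / (r m) ^ 2) * ((∑ n, 1 / r n) - 2 / r m)) * ((c - K m) * r m) ∧
    ((∑ m, (-(2 / (r m) ^ 2) * ((∑ n, 1 / r n) - 2 / r m)) * ((c - K m) * r m)) = 0 →
      ∀ m n, K m = K n) := by
  have hrne : ∀ m, r m ≠ 0 := fun m => (hr m).ne'
  have hKi : ∀ m, K i ≤ K m := by
    intro m
    by_cases h : m = i
    · subst h; exact le_refl _
    · exact (hmono i m).1 (le_of_lt (hmin m h))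
  have hs : ∀ m, 0 < 1 / r m := fun m => one_div_pos.mpr (hr m)
  have hS : ∀ m, m ≠ i → 2 / r m < ∑ n, 1 / r n := by
    intro m hm
    have h1 : 1 / r i + 1 / r m ≤ ∑ n, 1 / r n := by
      have h := Finset.sum_le_sum_of_subset_of_nonneg
        (Finset.subset_univ ({i, m} : Finset (Fin 4)))
        (fun n _ _ => le_of_lt (hs n))
      rwa [Finset.sum_pair (Ne.symm hm)] at h
    have h2 : 1 / r m < 1 / r i := one_div_lt_one_div_of_lt (hr i) (hmin m hm)
    have h3 : 2 / r m = 1 / r m + 1 / r m := by ring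
    linarith
  have hterm : ∀ m : Fin 4, (-(2 / (r m) ^ 2) * ((∑ n, 1 / r n) - 2 / r m)) * ((c - K m) * r m)
      = -2 * (1 / r m) * ((∑ n, 1 / r n) - 2 / r m) * (c - K m) := by
    intro m
    have h := hrne m
    field_simp
  have hE : (∑ m, (-(2 / (r m) ^ 2) * ((∑ n, 1 / r n) - 2 / r m)) * ((c - K m) * r m))
      = ∑ m, 2 * ((1 / r m) * ((∑ n, 1 / r n) - 2 / r m)) * (K m - K i) := by
    simp only [hterm]
    simp only [Fin.sum_univ_four] at hQ ⊢
    linear_combination (-2 * (c - K i)) * hQ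
  have hnn : ∀ m ∈ (Finset.univ : Finset (Fin 4)),
      0 ≤ 2 * ((1 / r m) * ((∑ n, 1 / r n) - 2 / r m)) * (K m - K i) := by
    intro m _
    by_cases h : m = i
    · subst h; simp
    · have h1 := hs m
      have h2 := hS m h
      have h3 := hKi m
      have h4 : 0 ≤ (1 / r m) * ((∑ n, 1 / r n) - 2 / r m) :=
        mul_nonneg h1.le (by linarith)
      exact mul_nonneg (by linarith) (by linarith)
  constructor
  · rw [hE]
    exact Finset.sum_nonneg hnn
  · intro h0
    rw [hE] at h0
    have heach := (Finset.sum_eq_zero_iff_of_nonneg hnn).mp h0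
    have hKeq : ∀ m, K m = K i := by
      intro m
      by_cases h : m = i
      · rw [h]
      · have hm := heach m (Finset.mem_univ m)
        have h1 := hs m
        have h2 := hS m h
        have h3 : (0:ℝ) < 2 * ((1 / r m) * ((∑ n, 1 / r n) - 2 / r m)) := mul_pos (by norm_num) (mul_pos h1 (by linarith))
        have h4 : K m - K i = 0 := by
          rcases mul_eq_zero.mp hm with h5 | h5
          · exact absurd h5 (ne_of_gt h3)
          · exact h5
        linarith
    intro m n
    rw [hKeq m, hKeq n]
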